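/- Suppose either (a) n' ≥ n and n' ≡ n (mod 2), or (b) n' = 2r'+1 is odd, n = 2r is even, and n' ≥ n. Then there exists an idempotent e ∈ S^B_{Q,q}(n',d) such that e S^B_{Q,q}(n',d) e is isomorphic to S^B_{Q,q}(n,d) as a K-algebra. -/

import Mathlib

set_option maxHeartbeats 1000000
set_option synthInstance.maxHeartbeats 1000000
open scoped TensorProduct
open scoped Classical

noncomputable section

/-- The index set `I(n)`: the integers in `[-⌊n/2⌋, ⌊n/2⌋]`, with `0` excluded when `n` is even. -/
def IFin (n : ℕ) : Finset ℤ :=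
  (Finset.Icc (-((n / 2 : ℕ) : ℤ)) ((n / 2 : ℕ) : ℤ)).filter fun i => i ≠ 0 ∨ n % 2 = 1

lemma neg_mem_IFin {n : ℕ} {i : ℤ} (h : i ∈ IFin n) : -i ∈ IFin n := by
  simp only [IFin, Finset.mem_filter, Finset.mem_Icc] at h ⊢
  rcases h with ⟨⟨h1, h2⟩, h3⟩
  refine ⟨⟨by omega, by omega⟩, ?_⟩
  rcases h3 with h3 | h3
  · exact Or.inl (by omega)
  · exact Or.inr h3

/-- Negation on the index set. -/
def negI (n : ℕ) (i : ↥(IFin n)) : ↥(IFin n) := ⟨-(i : ℤ), neg_mem_IFin i.2⟩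

variable (K : Type) [Field K] (Q q : K) (n d : ℕ)

/-- The tensor space `V(n)^{⊗ d}`, realized as the free `K`-module on the set of `d`-tuples
of elements of `I(n)`; the tuple `μ` corresponds to the basis vector `v_μ`. -/
def TSp : Type := (Fin d → ↥(IFin n)) →₀ K

instance : AddCommGroup (TSp K n d) :=
  inferInstanceAs (AddCommGroup ((Fin d → ↥(IFin n)) →₀ K))

instance : Module K (TSp K n d) :=
  inferInstanceAs (Module K ((Fin d → ↥(IFin n)) →₀ K))

/-- The basis vector `v_μ` of the tensor space. -/
def bs (μ : Fin d → ↥(IFin n)) : TSp K n d := Finsupp.single μ 1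

/-- The value of the right action of the Hecke generator `T_t` (for `t = 0` this is `T_0`,
for `t ≥ 1` it is the type A generator acting on the tensor positions `t-1, t` (0-indexed)). -/
def preT (t : Fin d) (μ : Fin d → ↥(IFin n)) : TSp K n d :=
  if (t : ℕ) = 0 then
    if 0 < ((μ t : ℤ)) then bs K n d (Function.update μ t (negI n (μ t)))
    else if ((μ t : ℤ)) = 0 then Q⁻¹ • bs K n d μ
    else bs K n d (Function.update μ t (negI n (μ t))) + (Q⁻¹ - Q) • bs K n d μ
  else
    let p : Fin d := ⟨(t : ℕ) - 1, Nat.lt_of_le_of_lt (Nat.sub_le _ _) t.isLt⟩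
    if ((μ p : ℤ)) < ((μ t : ℤ)) then bs K n d (μ ∘ Equiv.swap p t)
    else if ((μ p : ℤ)) = ((μ t : ℤ)) then q⁻¹ • bs K n d μ
    else bs K n d (μ ∘ Equiv.swap p t) + (q⁻¹ - q) • bs K n d μ

/-- The operator on the tensor space given by the right action of the Hecke generator `T_t`. -/
def Tact (t : Fin d) : Module.End K (TSp K n d) :=
  Finsupp.lift (TSp K n d) K (Fin d → ↥(IFin n)) (preT K Q q n d t)

/-- The right action operator of `T_t` for a natural number index, the identity out of range. -/
def Tact' (t : ℕ) : Module.End K (TSp K n d) :=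
  if h : t < d then Tact K Q q n d ⟨t, h⟩ else 1

/-- The type B `q`-Schur algebra `S^B_{Q,q}(n,d) = End_{H^B_{Q,q}(d)}(V(n)^{⊗d})`, realized as
the centralizer of the operators giving the right action of the generators `T_0, …, T_{d-1}`. -/
def SchurB : Subalgebra K (Module.End K (TSp K n d)) :=
  Subalgebra.centralizer K (Set.range (Tact K Q q n d))

/-- The type A `q`-Schur algebra `S^A_q(m,i) = End_{H_q(Σ_i)}(V(m)^{⊗i})`, realized as the
centralizer of the operators giving the right action of the generators `T_1, …, T_{i-1}`. -/
def SchurA (m i : ℕ) : Subalgebra K (Module.End K (TSp K m i)) :=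
  Subalgebra.centralizer K {f | ∃ t : Fin i, (t : ℕ) ≠ 0 ∧ f = Tact K q q m i t}

/-- The polynomial `f^B_d(Q,q) = ∏_{i=1-d}^{d-1} (Q⁻² + q^{2i})`. -/
def fB : K := ∏ i ∈ Finset.Icc (1 - (d : ℤ)) ((d : ℤ) - 1), (Q⁻¹ ^ 2 + q ^ (2 * i))


-- generic finsupp lemmas
lemma lift_single_one' {K X M : Type} [Field K] [AddCommMonoid M] [Module K M]
    (g : X → M) (x : X) : (Finsupp.lift M K X g) (Finsupp.single x 1) = g x := by simp

lemma fhom_ext' {K X M : Type} [Field K] [AddCommMonoid M] [Module K M]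
    {f g : (X →₀ K) →ₗ[K] M} (h : ∀ x, f (Finsupp.single x 1) = g (Finsupp.single x 1)) :
    f = g := by
  refine Finsupp.lhom_ext fun x c => ?_
  have : (Finsupp.single x c : X →₀ K) = c • Finsupp.single x 1 := by simp
  rw [this, map_smul, map_smul, h]

variable (K : Type) [Field K] (Q q : K) (n d : ℕ)
section AuxCorner
variable {n} {n' : ℕ}

lemma tsp_hom_ext {M : Type} [AddCommMonoid M] [Module K M]
    {f g : TSp K n d →ₗ[K] M} (h : ∀ μ, f (bs K n d μ) = g (bs K n d μ)) : f = g :=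
  fhom_ext' h

lemma Tact_bs (t : Fin d) (μ : Fin d → ↥(IFin n)) :
    Tact K Q q n d t (bs K n d μ) = preT K Q q n d t μ :=
  lift_single_one' (preT K Q q n d t) μ

def embT (hsub : IFin n ⊆ IFin n') (μ : Fin d → ↥(IFin n)) : Fin d → ↥(IFin n') :=
  fun t => ⟨(μ t : ℤ), hsub (μ t).2⟩

variable (hsub : IFin n ⊆ IFin n')

def iotaL : TSp K n d →ₗ[K] TSp K n' d :=
  Finsupp.lift _ K _ fun μ => bs K n' d (embT d hsub μ)

def piL : TSp K n' d →ₗ[K] TSp K n d :=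
  Finsupp.lift _ K _ fun ν =>
    if h : ∀ t, ((ν t : ℤ)) ∈ IFin n then bs K n d (fun t => ⟨(ν t : ℤ), h t⟩) else 0

lemma iota_bs (μ) : iotaL K d hsub (bs K n d μ) = bs K n' d (embT d hsub μ) :=
  lift_single_one' _ μ

lemma pi_bs (ν : Fin d → ↥(IFin n')) : piL K d (n := n) (bs K n' d ν) =
    if h : ∀ t, ((ν t : ℤ)) ∈ IFin n then bs K n d (fun t => ⟨(ν t : ℤ), h t⟩) else 0 :=
  lift_single_one' _ ν

-- transport lemmas
lemma embT_update (μ : Fin d → ↥(IFin n)) (t : Fin d) :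
    embT d hsub (Function.update μ t (negI n (μ t))) =
      Function.update (embT d hsub μ) t (negI n' (embT d hsub μ t)) := by
  funext s
  by_cases hs : s = t
  · subst hs; simp [embT, negI]
  · simp [embT, Function.update_of_ne hs]

lemma embT_comp (μ : Fin d → ↥(IFin n)) (e : Equiv.Perm (Fin d)) :
    embT d hsub (μ ∘ e) = embT d hsub μ ∘ e := rfl

lemma P_update_neg (ν : Fin d → ↥(IFin n')) (t : Fin d) :
    (∀ s, ((Function.update ν t (negI n' (ν t)) s : ℤ)) ∈ IFin n) ↔
      (∀ s, ((ν s : ℤ)) ∈ IFin n) := by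
  constructor
  · intro h s
    by_cases hs : s = t
    · subst hs
      have := h s
      rw [Function.update_self] at this
      have := neg_mem_IFin this
      simpa [negI] using this
    · have := h s; rwa [Function.update_of_ne hs] at this
  · intro h s
    by_cases hs : s = t
    · subst hs
      rw [Function.update_self]
      exact neg_mem_IFin (h s)
    · rw [Function.update_of_ne hs]; exact h s

lemma P_comp (ν : Fin d → ↥(IFin n')) (e : Equiv.Perm (Fin d)) :
    (∀ s, (((ν ∘ e) s : ℤ)) ∈ IFin n) ↔ (∀ s, ((ν s : ℤ)) ∈ IFin n) := by
  constructor
  · intro h s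
    have := h (e.symm s)
    simpa using this
  · intro h s; exact h (e s)

lemma restr_update (ν : Fin d → ↥(IFin n')) (t : Fin d)
    (h : ∀ s, ((ν s : ℤ)) ∈ IFin n)
    (h' : ∀ s, ((Function.update ν t (negI n' (ν t)) s : ℤ)) ∈ IFin n) :
    (fun s => (⟨((Function.update ν t (negI n' (ν t)) s : ℤ)), h' s⟩ : ↥(IFin n))) =
      Function.update (fun s => ⟨(ν s : ℤ), h s⟩) t (negI n ⟨(ν t : ℤ), h t⟩) := by
  funext s
  by_cases hs : s = t
  · subst hs; apply Subtype.ext; simp [negI]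
  · apply Subtype.ext; simp [Function.update_of_ne hs]

-- intertwining L1
lemma Tact_iota (t : Fin d) :
    (Tact K Q q n' d t) ∘ₗ iotaL K d hsub = iotaL K d hsub ∘ₗ Tact K Q q n d t := by
  apply tsp_hom_ext
  intro μ
  simp only [LinearMap.comp_apply, iota_bs, Tact_bs]
  have hval : ∀ x : Fin d, ((embT d hsub μ x : ℤ)) = ((μ x : ℤ)) := fun _ => rfl
  unfold preT
  simp only [hval]
  split_ifs <;>
    simp [map_add, map_smul, iota_bs, embT_update, embT_comp, hval]

-- intertwining L2
lemma pi_Tact (t : Fin d) :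
    piL K d (n := n) (n' := n') ∘ₗ Tact K Q q n' d t = Tact K Q q n d t ∘ₗ piL K d := by
  apply tsp_hom_ext
  intro ν
  simp only [LinearMap.comp_apply, Tact_bs, pi_bs]
  by_cases hP : ∀ s, ((ν s : ℤ)) ∈ IFin n
  · rw [dif_pos hP, Tact_bs]
    have hval : ∀ x : Fin d, (((fun s => (⟨(ν s : ℤ), hP s⟩ : ↥(IFin n))) x : ℤ)) = ((ν x : ℤ)) :=
      fun _ => rfl
    have hup : ∀ s, ((Function.update ν t (negI n' (ν t)) s : ℤ)) ∈ IFin n :=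
      (P_update_neg d ν t).mpr hP
    unfold preT
    simp only [hval]
    split_ifs with h1 h2 h3 h2 h3
    · rw [pi_bs, dif_pos hup, restr_update d ν t hP hup]
    · rw [map_smul, pi_bs, dif_pos hP]
    · rw [map_add, map_smul, pi_bs, pi_bs, dif_pos hup, dif_pos hP,
        restr_update d ν t hP hup]
    · rw [pi_bs, dif_pos ((P_comp d ν _).mpr hP)]; rfl
    · rw [map_smul, pi_bs, dif_pos hP]
    · rw [map_add, map_smul, pi_bs, pi_bs, dif_pos ((P_comp d ν _).mpr hP), dif_pos hP]; rfl
  · rw [dif_neg hP, map_zero]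
    have hup : ¬ ∀ s, ((Function.update ν t (negI n' (ν t)) s : ℤ)) ∈ IFin n :=
      fun h => hP ((P_update_neg d ν t).mp h)
    unfold preT
    dsimp only
    split_ifs
    · rw [pi_bs, dif_neg hup]
    · rw [map_smul, pi_bs, dif_neg hP, smul_zero]
    · rw [map_add, map_smul, pi_bs, pi_bs, dif_neg hup, dif_neg hP, smul_zero, add_zero]
    · rw [pi_bs, dif_neg (fun h => hP ((P_comp d ν _).mp h))]
    · rw [map_smul, pi_bs, dif_neg hP, smul_zero]
    · rw [map_add, map_smul, pi_bs, pi_bs, dif_neg (fun h => hP ((P_comp d ν _).mp h)),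
        dif_neg hP, smul_zero, add_zero]

lemma pi_iota : piL K d (n := n) (n' := n') ∘ₗ iotaL K d hsub = LinearMap.id := by
  apply tsp_hom_ext
  intro μ
  simp only [LinearMap.comp_apply, iota_bs, pi_bs, LinearMap.id_apply]
  have hP : ∀ s, ((embT d hsub μ s : ℤ)) ∈ IFin n := fun s => (μ s).2
  rw [dif_pos hP]
  congr 1


lemma phi_mem (x : ↥(SchurB K Q q n d)) :
    iotaL K d hsub ∘ₗ x.val ∘ₗ piL K d ∈ SchurB K Q q n' d := by
  refine (Subalgebra.mem_centralizer_iff K).mpr ?_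
  rintro g ⟨t, rfl⟩
  have hx : ∀ v, Tact K Q q n d t (x.val v) = x.val (Tact K Q q n d t v) := fun v =>
    LinearMap.congr_fun ((Subalgebra.mem_centralizer_iff K).mp x.2
      (Tact K Q q n d t) ⟨t, rfl⟩) v
  have k1 : ∀ v, Tact K Q q n' d t (iotaL K d hsub v) = iotaL K d hsub (Tact K Q q n d t v) :=
    fun v => by simpa using LinearMap.congr_fun (Tact_iota K Q q d hsub t) v
  have k2 : ∀ w, piL K d (n := n) (Tact K Q q n' d t w) = Tact K Q q n d t (piL K d w) :=
    fun w => by simpa using LinearMap.congr_fun (pi_Tact K Q q d t (n := n) (n' := n')) w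
  refine LinearMap.ext fun w => ?_
  simp only [Module.End.mul_apply, LinearMap.comp_apply, k1, hx, k2]

def phiMap : ↥(SchurB K Q q n d) →ₗ[K] ↥(SchurB K Q q n' d) where
  toFun x := ⟨iotaL K d hsub ∘ₗ x.val ∘ₗ piL K d, phi_mem K Q q d hsub x⟩
  map_add' x y := by
    apply Subtype.ext
    refine LinearMap.ext fun w => ?_
    simp [LinearMap.comp_apply]
  map_smul' c x := by
    apply Subtype.ext
    refine LinearMap.ext fun w => ?_
    simp [LinearMap.comp_apply]

lemma phiMap_val (x : ↥(SchurB K Q q n d)) :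
    (phiMap K Q q d hsub x).val = iotaL K d hsub ∘ₗ x.val ∘ₗ piL K d := rfl

lemma IFin_subset {n n' : ℕ}
    (hcase : (n ≤ n' ∧ n' % 2 = n % 2) ∨ (n ≤ n' ∧ n' % 2 = 1 ∧ n % 2 = 0)) :
    IFin n ⊆ IFin n' := by
  intro i hi
  simp only [IFin, Finset.mem_filter, Finset.mem_Icc] at hi ⊢
  omega

end AuxCorner

/-- If (a) `n' ≥ n` with `n' ≡ n (mod 2)`, or (b) `n'` odd, `n` even and
`n' ≥ n`, then there is an idempotent `e ∈ S^B_{Q,q}(n',d)` whose corner algebra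
`e S^B_{Q,q}(n',d) e` is isomorphic to `S^B_{Q,q}(n,d)` as a `K`-algebra.  The isomorphism is
encoded by an injective `K`-linear multiplicative map `φ : S^B_{Q,q}(n,d) → S^B_{Q,q}(n',d)`
with `φ 1 = e` and image exactly the corner `e S^B_{Q,q}(n',d) e`. -/
theorem schurB_corner_schurB (hq : q ≠ 0) (hQ : Q ≠ 0) (hd : 0 < d) (hn : 0 < n) (n' : ℕ)
    (hcase : (n ≤ n' ∧ n' % 2 = n % 2) ∨ (n ≤ n' ∧ n' % 2 = 1 ∧ n % 2 = 0)) :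
    ∃ e : ↥(SchurB K Q q n' d), IsIdempotentElem e ∧
      ∃ φ : ↥(SchurB K Q q n d) →ₗ[K] ↥(SchurB K Q q n' d),
        Function.Injective φ ∧ (∀ x y, φ (x * y) = φ x * φ y) ∧ φ 1 = e ∧
        (∀ a : ↥(SchurB K Q q n' d), a ∈ LinearMap.range φ ↔ e * a * e = a) := by
  have hsub : IFin n ⊆ IFin n' := IFin_subset hcase
  set ι : TSp K n d →ₗ[K] TSp K n' d := iotaL K d hsub with hι
  set π : TSp K n' d →ₗ[K] TSp K n d := piL K d (n := n) (n' := n') with hπ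
  have k1 : ∀ (t : Fin d) v, Tact K Q q n' d t (ι v) = ι (Tact K Q q n d t v) := by
    intro t v
    simpa using LinearMap.congr_fun (Tact_iota K Q q d hsub t) v
  have k2 : ∀ (t : Fin d) w, π (Tact K Q q n' d t w) = Tact K Q q n d t (π w) := by
    intro t w
    simpa using LinearMap.congr_fun (pi_Tact K Q q d t (n := n) (n' := n')) w
  have k3 : ∀ v, π (ι v) = v := by
    intro v
    simpa using LinearMap.congr_fun (pi_iota K d hsub) v
  have hιinj : Function.Injective ι := by
    intro a b hab
    have := congrArg π hab
    rwa [k3, k3] at this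
  -- the idempotent
  set eE : Module.End K (TSp K n' d) := ι ∘ₗ π with heE
  have heMem : eE ∈ SchurB K Q q n' d := by
    refine (Subalgebra.mem_centralizer_iff K).mpr ?_
    rintro g ⟨t, rfl⟩
    refine LinearMap.ext fun w => ?_
    simp only [Module.End.mul_apply, heE, LinearMap.comp_apply]
    rw [k1, k2]
  -- commuting of elements of SchurB with Tact
  have hB : ∀ (m : ℕ) (f : Module.End K (TSp K m d)), f ∈ SchurB K Q q m d →
      ∀ (t : Fin d) v, Tact K Q q m d t (f v) = f (Tact K Q q m d t v) := by
    intro m f hf t v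
    exact LinearMap.congr_fun ((Subalgebra.mem_centralizer_iff K).mp hf
      (Tact K Q q m d t) ⟨t, rfl⟩) v
  refine ⟨⟨eE, heMem⟩, ?_, ?_⟩
  · apply Subtype.ext
    show eE * eE = eE
    refine LinearMap.ext fun w => ?_
    simp only [Module.End.mul_apply, heE, LinearMap.comp_apply, k3]
  · refine ⟨phiMap K Q q d hsub, ?_, ?_, ?_, ?_⟩
    · -- injective
      intro x y hxy
      apply Subtype.ext
      refine LinearMap.ext fun v => ?_
      have h2 := congrArg (fun z : ↥(SchurB K Q q n' d) => z.val (ι v)) hxy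
      simp only [phiMap_val, LinearMap.comp_apply, hι, k3] at h2
      rw [← hι, ← hπ, k3] at h2
      exact hιinj h2
    · -- multiplicative
      intro x y
      apply Subtype.ext
      show (phiMap K Q q d hsub (x * y)).val = (phiMap K Q q d hsub x).val * (phiMap K Q q d hsub y).val
      simp only [phiMap_val]
      refine LinearMap.ext fun w => ?_
      have hxy : (x * y).val = x.val * y.val := rfl
      simp only [hxy, Module.End.mul_apply, LinearMap.comp_apply, hι, hπ]
      exact congrArg _ (congrArg _ (k3 (y.val (piL K d w))).symm)
    · -- maps 1 to e
      apply Subtype.ext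
      show (phiMap K Q q d hsub 1).val = eE
      simp only [phiMap_val, heE]
      refine LinearMap.ext fun w => ?_
      have h1 : ((1 : ↥(SchurB K Q q n d)) : Module.End K (TSp K n d)) = LinearMap.id := rfl
      simp [h1]
      rfl
    · -- range characterization
      intro a
      constructor
      · rintro ⟨x, rfl⟩
        apply Subtype.ext
        show eE * (phiMap K Q q d hsub x).val * eE = (phiMap K Q q d hsub x).val
        simp only [phiMap_val]
        refine LinearMap.ext fun w => ?_
        simp only [Module.End.mul_apply, heE, LinearMap.comp_apply, hι, hπ]
        rw [k3, k3]
      · intro ha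
        have hbmem : piL K d (n := n) ∘ₗ a.val ∘ₗ iotaL K d hsub ∈ SchurB K Q q n d := by
          refine (Subalgebra.mem_centralizer_iff K).mpr ?_
          rintro g ⟨t, rfl⟩
          have hacomm : ∀ v, Tact K Q q n' d t (a.val v) = a.val (Tact K Q q n' d t v) :=
            fun v => LinearMap.congr_fun ((Subalgebra.mem_centralizer_iff K).mp a.2
              (Tact K Q q n' d t) ⟨t, rfl⟩) v
          refine LinearMap.ext fun v => ?_
          simp only [Module.End.mul_apply, LinearMap.comp_apply]
          rw [← k2, hacomm, ← k1]
        refine ⟨⟨piL K d (n := n) ∘ₗ a.val ∘ₗ iotaL K d hsub, hbmem⟩, ?_⟩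
        apply Subtype.ext
        have haval : eE * a.val * eE = a.val := congrArg Subtype.val ha
        show (phiMap K Q q d hsub _).val = a.val
        rw [phiMap_val]
        conv_rhs => rw [← haval]
        refine LinearMap.ext fun w => ?_
        simp only [Module.End.mul_apply, heE, LinearMap.comp_apply, hι, hπ, k3]


end
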